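/- Let u : [t0,t1] → ℝ^m be integrable in each component. Then for all words η, ξ over X = {x_0, x_1, …, x_m} and all t ∈ [t0,t1], the pointwise product of iterated integrals satisfies E_η[u](t,t0) · E_ξ[u](t,t0) = Σ_{ν ∈ X*} (η ⧢ ξ, ν) · E_ν[u](t,t0), where the sum is finite because (η ⧢ ξ, ν) = 0 unless |ν| = |η| + |ξ|. -/

import Mathlib

open MeasureTheory

/-- Extend `u : ℝ → ℝ^m` to the alphabet `X = {x_0, x_1, …, x_m}` by `u_0 ≡ 1`. -/
noncomputable def uext (m : ℕ) (u : ℝ → Fin m → ℝ) : ℝ → Fin (m + 1) → ℝ :=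
  fun t => Fin.cases 1 (fun j => u t j)

/-- Iterated integrals `E_η[u](t, t0)`: `E_∅[u] ≡ 1` and
`E_{x_i η̄}[u](t,t0) = ∫_{t0}^t u_i(τ) E_{η̄}[u](τ,t0) dτ`. -/
noncomputable def iterInt (m : ℕ) (u : ℝ → Fin m → ℝ) (t0 : ℝ) :
    List (Fin (m + 1)) → ℝ → ℝ
  | [] => fun _ => 1
  | i :: w => fun t => ∫ τ in t0..t, uext m u τ i * iterInt m u t0 w τ

/-- `shuffleCoeff η ξ ν` is the coefficient `(η ⧢ ξ, ν)` of the word `ν` in the shuffle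
product of the words `η` and `ξ`, defined inductively by `η ⧢ ∅ = ∅ ⧢ η = η` and
`(x_i η) ⧢ (x_j ξ) = x_i (η ⧢ (x_j ξ)) + x_j ((x_i η) ⧢ ξ)`. -/
def shuffleCoeff {A : Type*} [DecidableEq A] : List A → List A → List A → ℝ
  | [], ξ, ν => if ν = ξ then 1 else 0
  | η, [], ν => if ν = η then 1 else 0
  | _ :: _, _ :: _, [] => 0
  | a :: η, b :: ξ, z :: ν =>
      (if z = a then shuffleCoeff η (b :: ξ) ν else 0) +
      (if z = b then shuffleCoeff (a :: η) ξ ν else 0)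
termination_by _ _ ν => ν.length

section Aux

variable {A : Type*} [DecidableEq A]

lemma shuffleCoeff_nil_left (ξ ν : List A) : shuffleCoeff [] ξ ν = if ν = ξ then 1 else 0 := by
  rw [shuffleCoeff]

lemma shuffleCoeff_nil_right (η ν : List A) : shuffleCoeff η [] ν = if ν = η then 1 else 0 := by
  cases η with
  | nil => rw [shuffleCoeff]
  | cons a η => rw [shuffleCoeff]; simp

lemma shuffleCoeff_cons_nil (a b : A) (η ξ : List A) : shuffleCoeff (a :: η) (b :: ξ) [] = 0 := by
  rw [shuffleCoeff]

lemma shuffleCoeff_cons (a b z : A) (η ξ ν : List A) :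
    shuffleCoeff (a :: η) (b :: ξ) (z :: ν) =
      (if z = a then shuffleCoeff η (b :: ξ) ν else 0) +
      (if z = b then shuffleCoeff (a :: η) ξ ν else 0) := by
  rw [shuffleCoeff]

lemma shuffleCoeff_length : ∀ (ν η ξ : List A), ν.length ≠ η.length + ξ.length →
    shuffleCoeff η ξ ν = 0 := by
  intro ν
  induction ν with
  | nil =>
    intro η ξ h
    match η, ξ with
    | [], ξ => rw [shuffleCoeff_nil_left, if_neg]; intro hh; apply h; rw [← hh]; simp
    | a :: η, [] => rw [shuffleCoeff_nil_right, if_neg]; intro hh; simp at hh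
    | a :: η, b :: ξ => exact shuffleCoeff_cons_nil a b η ξ
  | cons z ν ih =>
    intro η ξ h
    match η, ξ with
    | [], ξ => rw [shuffleCoeff_nil_left, if_neg]; intro hh; apply h; rw [← hh]; simp
    | a :: η, [] => rw [shuffleCoeff_nil_right, if_neg]; intro hh; apply h; rw [hh]; simp
    | a :: η, b :: ξ =>
      rw [shuffleCoeff_cons]
      rw [ih η (b :: ξ) (by simp at h ⊢; omega), ih (a :: η) ξ (by simp at h ⊢; omega)]
      simp

end Aux

/-- The finite set of all words of length `n` over `Fin (m+1)`. -/
def Lset (m : ℕ) : ℕ → Finset (List (Fin (m + 1)))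
  | 0 => {[]}
  | n + 1 => (Finset.univ ×ˢ Lset m n).image fun p => p.1 :: p.2

lemma mem_Lset (m : ℕ) : ∀ (n : ℕ) (ν : List (Fin (m + 1))), ν ∈ Lset m n ↔ ν.length = n := by
  intro n
  induction n with
  | zero => intro ν; simp [Lset, List.length_eq_zero_iff]
  | succ n ih =>
    intro ν
    cases ν with
    | nil => simp [Lset]
    | cons z ν => simp [Lset, ih]

/-- Integration by parts for primitives of integrable functions, via Fubini. -/
lemma parts_aux (t0 t1 : ℝ) (f g : ℝ → ℝ)
    (hf : IntegrableOn f (Set.Icc t0 t1)) (hg : IntegrableOn g (Set.Icc t0 t1))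
    (t : ℝ) (ht : t ∈ Set.Icc t0 t1) :
    (∫ x in t0..t, f x) * (∫ x in t0..t, g x) =
      (∫ x in t0..t, f x * ∫ y in t0..x, g y) +
      (∫ x in t0..t, (∫ y in t0..x, f y) * g x) := by
  obtain ⟨h0, h1⟩ := ht
  have hsub : Set.Ioc t0 t ⊆ Set.Icc t0 t1 := fun x hx => ⟨le_of_lt hx.1, hx.2.trans h1⟩
  set μ := volume.restrict (Set.Ioc t0 t) with hμ
  have hfμ : Integrable f μ := hf.mono_set hsub
  have hgμ : Integrable g μ := hg.mono_set hsub
  have hrw : ∀ h : ℝ → ℝ, (∫ x in t0..t, h x) = ∫ x, h x ∂μ := fun h =>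
    intervalIntegral.integral_of_le h0
  rw [hrw, hrw, hrw, hrw]
  set h : ℝ × ℝ → ℝ := fun p => f p.1 * g p.2 with hh
  have hprod : Integrable h (μ.prod μ) := hfμ.mul_prod hgμ
  have key : (∫ x, f x ∂μ) * (∫ x, g x ∂μ) = ∫ p, h p ∂(μ.prod μ) :=
    (integral_prod_mul f g).symm
  rw [key]
  set s : Set (ℝ × ℝ) := {p | p.2 ≤ p.1} with hs_def
  have hs : MeasurableSet s := measurableSet_le measurable_snd measurable_fst
  have hsplit : h = s.indicator h + sᶜ.indicator h := (Set.indicator_self_add_compl s h).symm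
  rw [show (∫ p, h p ∂(μ.prod μ)) = (∫ p, s.indicator h p ∂(μ.prod μ)) +
      (∫ p, sᶜ.indicator h p ∂(μ.prod μ)) by
    rw [← integral_add (hprod.indicator hs) (hprod.indicator hs.compl)]
    exact integral_congr_ae (Filter.Eventually.of_forall fun p => by
      conv_lhs => rw [hsplit]
      rfl)]
  congr 1
  · rw [integral_prod _ (hprod.indicator hs)]
    refine setIntegral_congr_fun measurableSet_Ioc fun x hx => ?_
    have hind : (fun y => s.indicator h (x, y)) =
        (Set.Iic x).indicator (fun y => f x * g y) := by
      funext y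
      by_cases hy : y ≤ x <;>
        simp [Set.indicator_apply, hs_def, Set.mem_setOf_eq, Set.mem_Iic, hy, hh]
    rw [hind, integral_indicator measurableSet_Iic, hμ,
      Measure.restrict_restrict measurableSet_Iic,
      show Set.Iic x ∩ Set.Ioc t0 t = Set.Ioc t0 x by
        ext y
        simp only [Set.mem_inter_iff, Set.mem_Iic, Set.mem_Ioc]
        constructor
        · rintro ⟨hy1, hy2, hy3⟩; exact ⟨hy2, hy1⟩
        · rintro ⟨hy1, hy2⟩; exact ⟨hy2, hy1, hy2.trans hx.2⟩,
      integral_const_mul, intervalIntegral.integral_of_le hx.1.le]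
  · rw [integral_prod_symm _ (hprod.indicator hs.compl)]
    refine setIntegral_congr_fun measurableSet_Ioc fun y hy => ?_
    have hind : (fun x => sᶜ.indicator h (x, y)) =
        (Set.Iio y).indicator (fun x => f x * g y) := by
      funext x
      by_cases hxy : x < y <;>
        simp [Set.indicator_apply, hs_def, Set.mem_setOf_eq, Set.mem_Iio, hxy, hh, not_le,
          not_lt.mp]
    rw [hind, integral_indicator measurableSet_Iio, hμ,
      Measure.restrict_restrict measurableSet_Iio,
      show Set.Iio y ∩ Set.Ioc t0 t = Set.Ioo t0 y by
        ext x
        simp only [Set.mem_inter_iff, Set.mem_Iio, Set.mem_Ioc, Set.mem_Ioo]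
        constructor
        · rintro ⟨hx1, hx2, hx3⟩; exact ⟨hx2, hx1⟩
        · rintro ⟨hx1, hx2⟩; exact ⟨hx2, hx1, (le_of_lt hx2).trans hy.2⟩,
      integral_mul_const, ← integral_Ioc_eq_integral_Ioo,
      intervalIntegral.integral_of_le hy.1.le]

section Main

variable {m : ℕ} {u : ℝ → Fin m → ℝ} {t0 t1 : ℝ}

lemma iterInt_nil : iterInt m u t0 [] = fun _ => 1 := rfl

lemma iterInt_cons (i : Fin (m + 1)) (w : List (Fin (m + 1))) :
    iterInt m u t0 (i :: w) = fun t => ∫ τ in t0..t, uext m u τ i * iterInt m u t0 w τ := rfl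

lemma uext_integrableOn (hint : ∀ i, IntegrableOn (fun t => u t i) (Set.Icc t0 t1))
    (i : Fin (m + 1)) : IntegrableOn (fun t => uext m u t i) (Set.Icc t0 t1) := by
  induction i using Fin.cases with
  | zero =>
    simp only [uext, Fin.cases_zero]
    exact (integrableOn_const_iff).mpr (Or.inr measure_Icc_lt_top)
  | succ j =>
    simp only [uext, Fin.cases_succ]
    exact hint j

lemma iterInt_props (hl : t0 ≤ t1) (hint : ∀ i, IntegrableOn (fun t => u t i) (Set.Icc t0 t1)) :
    ∀ w : List (Fin (m + 1)), ContinuousOn (iterInt m u t0 w) (Set.Icc t0 t1) ∧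
      ∀ i, IntegrableOn (fun τ => uext m u τ i * iterInt m u t0 w τ) (Set.Icc t0 t1) := by
  intro w
  induction w with
  | nil =>
    refine ⟨by rw [iterInt_nil]; exact continuousOn_const, fun i => ?_⟩
    simp only [iterInt_nil, mul_one]
    exact uext_integrableOn hint i
  | cons j w ih =>
    have hInt : IntegrableOn (fun τ => uext m u τ j * iterInt m u t0 w τ) (Set.Icc t0 t1) :=
      ih.2 j
    have hcont : ContinuousOn (iterInt m u t0 (j :: w)) (Set.Icc t0 t1) := by
      rw [iterInt_cons]
      have := intervalIntegral.continuousOn_primitive_interval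
        (f := fun τ => uext m u τ j * iterInt m u t0 w τ) (a := t0) (b := t1) (μ := volume)
        (by rwa [Set.uIcc_of_le hl])
      rwa [Set.uIcc_of_le hl] at this
    refine ⟨hcont, fun i => ?_⟩
    obtain ⟨C, hC⟩ := (isCompact_Icc (a := t0) (b := t1)).exists_bound_of_continuousOn hcont
    have h2 : IntegrableOn (fun τ => iterInt m u t0 (j :: w) τ * uext m u τ i)
        (Set.Icc t0 t1) := by
      refine Integrable.bdd_mul (c := C) (uext_integrableOn hint i)
        (hcont.aestronglyMeasurable measurableSet_Icc) ?_
      exact (ae_restrict_iff' measurableSet_Icc).2 (Filter.Eventually.of_forall fun x hx => hC x hx)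
    exact h2.congr_fun (fun x _ => mul_comm _ _) measurableSet_Icc

lemma key_sum (hlt : t0 < t1) (hint : ∀ i, IntegrableOn (fun t => u t i) (Set.Icc t0 t1)) :
    ∀ (n : ℕ) (η ξ : List (Fin (m + 1))), η.length + ξ.length = n →
      ∀ t ∈ Set.Icc t0 t1,
        iterInt m u t0 η t * iterInt m u t0 ξ t =
          ∑ ν ∈ Lset m n, shuffleCoeff η ξ ν * iterInt m u t0 ν t := by
  have hl : t0 ≤ t1 := hlt.le
  intro n
  induction n using Nat.strong_induction_on with
  | _ n IH =>
  intro η ξ hn t ht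
  match η, ξ with
  | [], ξ =>
    have hξ : ξ.length = n := by simpa using hn
    simp only [shuffleCoeff_nil_left, ite_mul, one_mul, zero_mul]
    rw [Finset.sum_ite_eq' (Lset m n) ξ (fun ν => iterInt m u t0 ν t),
      if_pos ((mem_Lset m n ξ).2 hξ), iterInt_nil, one_mul]
  | a :: η, [] =>
    have hη : (a :: η).length = n := by simpa using hn
    simp only [shuffleCoeff_nil_right, ite_mul, one_mul, zero_mul]
    rw [Finset.sum_ite_eq' (Lset m n) (a :: η) (fun ν => iterInt m u t0 ν t),
      if_pos ((mem_Lset m n (a :: η)).2 hη), iterInt_nil, mul_one]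
  | a :: ηt, b :: ξt =>
    have hlen : (a :: ηt).length + (b :: ξt).length = ηt.length + (b :: ξt).length + 1 := by
      simp; omega
    set k : ℕ := ηt.length + (b :: ξt).length with hk
    have hkn : n = k + 1 := by rw [← hn, hlen]
    have hk2 : (a :: ηt).length + ξt.length = k := by simp [hk]; omega
    have hklt : k < n := by omega
    have IH1 := IH k hklt ηt (b :: ξt) rfl
    have IH2 := IH k hklt (a :: ηt) ξt hk2
    -- integrability facts
    have props := iterInt_props hl hint
    have hIccsub : Set.Icc t0 t ⊆ Set.Icc t0 t1 := Set.Icc_subset_Icc le_rfl ht.2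
    have hIntSub : ∀ (i : Fin (m + 1)) (w : List (Fin (m + 1))),
        IntervalIntegrable (fun τ => uext m u τ i * iterInt m u t0 w τ) volume t0 t := by
      intro i w
      apply IntegrableOn.intervalIntegrable
      rw [Set.uIcc_of_le ht.1]
      exact ((props w).2 i).mono_set hIccsub
    -- integration by parts
    rw [iterInt_cons a ηt, iterInt_cons b ξt]
    simp only
    rw [parts_aux t0 t1 _ _ ((props ηt).2 a) ((props ξt).2 b) t ht]
    have e1 : (∫ x in t0..t, (uext m u x a * iterInt m u t0 ηt x) *
          ∫ y in t0..x, uext m u y b * iterInt m u t0 ξt y) =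
        ∑ ν ∈ Lset m k, shuffleCoeff ηt (b :: ξt) ν * iterInt m u t0 (a :: ν) t := by
      rw [intervalIntegral.integral_congr (g := fun x => ∑ ν ∈ Lset m k,
          shuffleCoeff ηt (b :: ξt) ν * (uext m u x a * iterInt m u t0 ν x))
        (fun x hx => by
          rw [Set.uIcc_of_le ht.1] at hx
          show uext m u x a * iterInt m u t0 ηt x * iterInt m u t0 (b :: ξt) x =
            ∑ ν ∈ Lset m k, shuffleCoeff ηt (b :: ξt) ν * (uext m u x a * iterInt m u t0 ν x)
          rw [mul_assoc, IH1 x (hIccsub hx), Finset.mul_sum]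
          exact Finset.sum_congr rfl fun ν _ => by ring)]
      rw [intervalIntegral.integral_finset_sum
        (fun ν _ => (hIntSub a ν).const_mul (shuffleCoeff ηt (b :: ξt) ν))]
      exact Finset.sum_congr rfl fun ν _ => by
        rw [intervalIntegral.integral_const_mul]; rfl
    have e2 : (∫ x in t0..t, (∫ y in t0..x, uext m u y a * iterInt m u t0 ηt y) *
          (uext m u x b * iterInt m u t0 ξt x)) =
        ∑ ν ∈ Lset m k, shuffleCoeff (a :: ηt) ξt ν * iterInt m u t0 (b :: ν) t := by
      rw [intervalIntegral.integral_congr (g := fun x => ∑ ν ∈ Lset m k,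
          shuffleCoeff (a :: ηt) ξt ν * (uext m u x b * iterInt m u t0 ν x))
        (fun x hx => by
          rw [Set.uIcc_of_le ht.1] at hx
          show iterInt m u t0 (a :: ηt) x * (uext m u x b * iterInt m u t0 ξt x) =
            ∑ ν ∈ Lset m k, shuffleCoeff (a :: ηt) ξt ν * (uext m u x b * iterInt m u t0 ν x)
          rw [mul_left_comm, IH2 x (hIccsub hx), Finset.mul_sum]
          exact Finset.sum_congr rfl fun ν _ => by ring)]
      rw [intervalIntegral.integral_finset_sum
        (fun ν _ => (hIntSub b ν).const_mul (shuffleCoeff (a :: ηt) ξt ν))]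
      exact Finset.sum_congr rfl fun ν _ => by
        rw [intervalIntegral.integral_const_mul]; rfl
    rw [e1, e2, hkn]
    -- now expand the RHS over Lset m (k+1)
    rw [show Lset m (k + 1) = (Finset.univ ×ˢ Lset m k).image fun p => p.1 :: p.2 from rfl]
    rw [Finset.sum_image (fun p _ q _ hpq => by
      obtain ⟨h1, h2⟩ := List.cons.injEq _ _ _ _ ▸ hpq
      exact Prod.ext h1 h2)]
    rw [Finset.sum_product]
    simp only [shuffleCoeff_cons, add_mul, ite_mul, zero_mul]
    rw [Finset.sum_comm (γ := Fin (m + 1))]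
    simp only [Finset.sum_add_distrib, Finset.sum_ite_eq', Finset.mem_univ, if_true]

end Main

/-- The shuffle-product identity for iterated integrals: for integrable `u`, all words
`η, ξ` and `t ∈ [t0,t1]`,
`E_η[u](t,t0) E_ξ[u](t,t0) = Σ_ν (η ⧢ ξ, ν) E_ν[u](t,t0)`, where the sum is finite
since `(η ⧢ ξ, ν) = 0` unless `|ν| = |η| + |ξ|`. -/
theorem iterInt_shuffle (m : ℕ) (t0 t1 : ℝ) (hlt : t0 < t1)
    (u : ℝ → Fin m → ℝ)
    (hint : ∀ i, IntegrableOn (fun t => u t i) (Set.Icc t0 t1)) :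
    ∀ η ξ : List (Fin (m + 1)),
      (∀ ν : List (Fin (m + 1)), ν.length ≠ η.length + ξ.length →
        shuffleCoeff η ξ ν = 0) ∧
      ∀ t ∈ Set.Icc t0 t1,
        iterInt m u t0 η t * iterInt m u t0 ξ t =
          ∑' ν : List (Fin (m + 1)), shuffleCoeff η ξ ν * iterInt m u t0 ν t := by
  intro η ξ
  refine ⟨fun ν h => shuffleCoeff_length ν η ξ h, fun t ht => ?_⟩
  rw [tsum_eq_sum (s := Lset m (η.length + ξ.length)) (fun ν hν => by
    rw [shuffleCoeff_length ν η ξ (fun hl => hν ((mem_Lset m _ ν).2 hl)), zero_mul])]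
  exact key_sum hlt hint (η.length + ξ.length) η ξ rfl t ht
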